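/- Let u, v be real numbers with u ≠ 0. Then for all positive reals x, y, the identity ((x^{u+v} + y^{u+v})/(2(x^v + y^v))) + ((x^{u-v} + y^{u-v})/(2(x^{-v} + y^{-v}))) = (x^u + y^u)/2 holds; equivalently, G_{u,0}(G_{u+v,v}(x,y), G_{u-v,-v}(x,y)) = G_{u,0}(x,y) whenever the parameters in each pair are distinct. -/

import Mathlib

noncomputable def gini (p q x y : ℝ) : ℝ := ((x ^ p + y ^ p) / (x ^ q + y ^ q)) ^ (1 / (p - q))

theorem power_mean_invariance (u v : ℝ) (hu : u ≠ 0) (x y : ℝ) (hx : 0 < x) (hy : 0 < y) :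
    ((x ^ (u + v) + y ^ (u + v)) / (2 * (x ^ v + y ^ v)) +
      (x ^ (u - v) + y ^ (u - v)) / (2 * (x ^ (-v) + y ^ (-v))) = (x ^ u + y ^ u) / 2) ∧
    (u + v ≠ v → u - v ≠ -v →
      gini u 0 (gini (u + v) v x y) (gini (u - v) (-v) x y) = gini u 0 x y) := by
  have ha : 0 < x ^ u := Real.rpow_pos_of_pos hx u
  have hb : 0 < y ^ u := Real.rpow_pos_of_pos hy u
  have hc : 0 < x ^ v := Real.rpow_pos_of_pos hx v
  have hd : 0 < y ^ v := Real.rpow_pos_of_pos hy v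
  have key : (x ^ (u+v) + y ^ (u+v)) / (x ^ v + y ^ v)
      + (x ^ (u-v) + y ^ (u-v)) / (x ^ (-v) + y ^ (-v)) = x ^ u + y ^ u := by
    rw [show u - v = u + (-v) by ring, Real.rpow_add hx, Real.rpow_add hy,
      Real.rpow_add hx, Real.rpow_add hy, Real.rpow_neg hx.le, Real.rpow_neg hy.le]
    rw [div_add_div _ _ (by positivity) (by positivity), div_eq_iff (by positivity)]
    field_simp
    ring
  have h1 : (x ^ (u + v) + y ^ (u + v)) / (2 * (x ^ v + y ^ v)) +
      (x ^ (u - v) + y ^ (u - v)) / (2 * (x ^ (-v) + y ^ (-v))) = (x ^ u + y ^ u) / 2 := by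
    rw [div_mul_eq_div_div_swap, div_mul_eq_div_div_swap, ← add_div, key]
  refine ⟨h1, fun _ _ => ?_⟩
  unfold gini
  have e1 : u + v - v = u := by ring
  have e2 : u - v - -v = u := by ring
  rw [e1, e2, sub_zero]
  have hA : 0 < (x ^ (u+v) + y ^ (u+v)) / (x ^ v + y ^ v) := by positivity
  have hB : 0 < (x ^ (u-v) + y ^ (u-v)) / (x ^ (-v) + y ^ (-v)) := by positivity
  rw [← Real.rpow_mul hA.le, ← Real.rpow_mul hB.le, one_div, inv_mul_cancel₀ hu,
    Real.rpow_one, Real.rpow_one, Real.rpow_zero, Real.rpow_zero, Real.rpow_zero,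
    Real.rpow_zero, key]
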